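/- Let A : Λ^{k+1}ℝ^n → Λ^{k+1}ℝ^n be a linear map satisfying the Legendre ellipticity condition ⟨Aξ; ξ⟩ ≥ γ|ξ|² for all ξ ∈ Λ^{k+1}ℝ^n with γ > 0. Define the linear map Ã on Λ^k ℝ^n ⊗ ℝ^n by ⟨Ã(b₁⊗a₁); b₂⊗a₂⟩ = ⟨A(a₁∧b₁); a₂∧b₂⟩ + ⟨a₁⌟b₁; a₂⌟b₂⟩, extended by bilinearity. Then Ã satisfies the Legendre–Hadamard condition: ⟨Ã(b⊗a); b⊗a⟩ ≥ min(γ,1)·|a|²|b|² for all a ∈ ℝ^n and b ∈ Λ^k ℝ^n. -/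

import Mathlib

open Finset
open scoped InnerProductSpace

/-- Model of `Λ^k ℝ^n`: coefficients indexed by subsets of `Fin n`, with the Euclidean
inner product. A `k`-form is supported on subsets of cardinality `k`. -/
def IsDeg {n : ℕ} (k : ℕ) (b : EuclideanSpace ℝ (Finset (Fin n))) : Prop :=
  ∀ S : Finset (Fin n), S.card ≠ k → b S = 0

/-- Exterior product of the 1-form dual to `a` with the form `b`. -/
noncomputable def wedge1 {n : ℕ} (a : EuclideanSpace ℝ (Fin n))
    (b : EuclideanSpace ℝ (Finset (Fin n))) : EuclideanSpace ℝ (Finset (Fin n)) :=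
  WithLp.toLp 2 (fun T => ∑ i : Fin n, if i ∈ T then
    (-1 : ℝ) ^ (T.filter (fun j => j < i)).card * a i * b (T.erase i) else 0)

/-- Interior product (contraction) of the vector `a` with the form `b`. -/
noncomputable def inter1 {n : ℕ} (a : EuclideanSpace ℝ (Fin n))
    (b : EuclideanSpace ℝ (Finset (Fin n))) : EuclideanSpace ℝ (Finset (Fin n)) :=
  WithLp.toLp 2 (fun S => ∑ i : Fin n, if i ∈ S then 0 else
    (-1 : ℝ) ^ (S.filter (fun j => j < i)).card * a i * b (insert i S))

namespace LHaux
variable {n : ℕ}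

noncomputable def sgn (i : Fin n) (S : Finset (Fin n)) : ℝ :=
  (-1 : ℝ) ^ (S.filter (fun j => j < i)).card

lemma sgn_sq (i : Fin n) (S : Finset (Fin n)) : sgn i S * sgn i S = 1 := by
  rw [sgn, ← pow_add]
  exact Even.neg_one_pow (Even.add_self _)

lemma sgn_insert_ge {i j : Fin n} (S : Finset (Fin n)) (h : ¬ j < i) :
    sgn i (insert j S) = sgn i S := by
  rw [sgn, sgn, filter_insert, if_neg h]

lemma sgn_insert_lt {i j : Fin n} {S : Finset (Fin n)} (h : j < i) (hj : j ∉ S) :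
    sgn i (insert j S) = - sgn i S := by
  rw [sgn, sgn, filter_insert, if_pos h, card_insert_of_notMem (by simp [hj]),
    pow_succ]
  ring

lemma sgn_pair {i j : Fin n} {S : Finset (Fin n)} (hij : i ≠ j) (hi : i ∉ S) (hj : j ∉ S) :
    sgn i (insert i (insert j S)) * sgn j (insert i (insert j S))
      = -(sgn i S * sgn j S) := by
  rcases hij.lt_or_gt with h | h
  · rw [sgn_insert_ge _ (lt_irrefl i), sgn_insert_ge _ (not_lt.2 h.le),
      sgn_insert_lt h (by simp [hi, hij]), sgn_insert_ge _ (lt_irrefl j)]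
    ring
  · rw [sgn_insert_ge _ (lt_irrefl i), sgn_insert_lt h hj, Finset.insert_comm,
      sgn_insert_ge _ (lt_irrefl j), sgn_insert_ge _ (not_lt.2 h.le)]
    ring

lemma sum_insert_bij (i : Fin n) (f : Finset (Fin n) → ℝ) :
    ∑ T ∈ univ.filter (fun T => i ∈ T), f T
      = ∑ S ∈ univ.filter (fun S => i ∉ S), f (insert i S) := by
  apply Finset.sum_nbij' (fun T => T.erase i) (fun S => insert i S)
  · intro T hT; simp
  · intro S hS; simp at hS; simp [hS]
  · intro T hT; simp at hT; simp [Finset.insert_erase hT]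
  · intro S hS; simp at hS; simp [Finset.erase_insert hS]
  · intro T hT; simp at hT; rw [Finset.insert_erase hT]

lemma sum_insert2_bij {i j : Fin n} (hij : i ≠ j) (f : Finset (Fin n) → ℝ) :
    ∑ T ∈ univ.filter (fun T => i ∈ T ∧ j ∈ T), f T
      = ∑ S ∈ univ.filter (fun S => i ∉ S ∧ j ∉ S), f (insert i (insert j S)) := by
  apply Finset.sum_nbij' (fun T => (T.erase i).erase j) (fun S => insert i (insert j S))
  · intro T hT; simp at hT; simp [hij, Ne.symm hij, hT]
  · intro S hS; simp at hS; simp [hij, Ne.symm hij, hS]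
  · intro T hT; simp at hT
    rw [Finset.insert_erase (show j ∈ T.erase i by simp [hT.2, Ne.symm hij]),
      Finset.insert_erase hT.1]
  · intro S hS; simp at hS
    rw [Finset.erase_insert, Finset.erase_insert hS.2]
    simp [hij, hS.1]
  · intro T hT; simp at hT
    rw [Finset.insert_erase (show j ∈ T.erase i by simp [hT.2, Ne.symm hij]),
      Finset.insert_erase hT.1]

lemma pyth (a : EuclideanSpace ℝ (Fin n)) (b : EuclideanSpace ℝ (Finset (Fin n))) :
    (∑ T : Finset (Fin n), wedge1 a b T * wedge1 a b T)
      + (∑ S : Finset (Fin n), inter1 a b S * inter1 a b S)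
      = (∑ i : Fin n, a i * a i) * (∑ S : Finset (Fin n), b S * b S) := by
  set w : Fin n → Finset (Fin n) → ℝ :=
    fun i T => if i ∈ T then sgn i T * a i * b (T.erase i) else 0 with hw
  set v : Fin n → Finset (Fin n) → ℝ :=
    fun i S => if i ∈ S then 0 else sgn i S * a i * b (insert i S) with hv
  have hwedge : ∀ T, wedge1 a b T = ∑ i, w i T := fun T => rfl
  have hinter : ∀ S, inter1 a b S = ∑ i, v i S := fun S => rfl
  have key : ∀ i j : Fin n,
      (∑ T : Finset (Fin n), w i T * w j T) + (∑ S : Finset (Fin n), v i S * v j S)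
        = if i = j then a i * a i * ∑ S : Finset (Fin n), b S * b S else 0 := by
    intro i j
    by_cases hij : i = j
    · subst hij
      rw [if_pos rfl]
      have e1 : (∑ T : Finset (Fin n), w i T * w i T)
          = ∑ S ∈ univ.filter (fun S => i ∉ S), a i * a i * (b S * b S) := by
        have : ∀ T : Finset (Fin n), w i T * w i T
            = if i ∈ T then a i * a i * (b (T.erase i) * b (T.erase i)) else 0 := by
          intro T
          by_cases h : i ∈ T
          · simp only [hw, if_pos h]
            linear_combination (a i * a i * b (T.erase i) * b (T.erase i)) * sgn_sq i T
          · simp [hw, h]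
        rw [Finset.sum_congr rfl (fun T _ => this T), ← Finset.sum_filter,
          sum_insert_bij i (fun T => a i * a i * (b (T.erase i) * b (T.erase i)))]
        refine Finset.sum_congr rfl (fun S hS => ?_)
        simp only [Finset.mem_filter] at hS
        rw [Finset.erase_insert hS.2]
      have e2 : (∑ S : Finset (Fin n), v i S * v i S)
          = ∑ T ∈ univ.filter (fun T => i ∈ T), a i * a i * (b T * b T) := by
        have : ∀ S : Finset (Fin n), v i S * v i S
            = if i ∉ S then a i * a i * (b (insert i S) * b (insert i S)) else 0 := by
          intro S
          by_cases h : i ∈ S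
          · simp [hv, h]
          · simp only [hv, if_neg h, if_pos h]
            linear_combination (a i * a i * b (insert i S) * b (insert i S)) * sgn_sq i S
        rw [Finset.sum_congr rfl (fun S _ => this S), ← Finset.sum_filter,
          ← sum_insert_bij i (fun T => a i * a i * (b T * b T))]
      rw [e1, e2, add_comm,
        Finset.sum_filter_add_sum_filter_not univ (fun S => i ∈ S)
          (fun S => a i * a i * (b S * b S)), ← Finset.mul_sum]
    · rw [if_neg hij]
      have e1 : (∑ T : Finset (Fin n), w i T * w j T)
          = ∑ S ∈ univ.filter (fun S => i ∉ S ∧ j ∉ S),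
              (sgn i (insert i (insert j S)) * a i * b (insert j S))
                * (sgn j (insert i (insert j S)) * a j * b (insert i S)) := by
        have : ∀ T : Finset (Fin n), w i T * w j T
            = if i ∈ T ∧ j ∈ T then
                (sgn i T * a i * b (T.erase i)) * (sgn j T * a j * b (T.erase j)) else 0 := by
          intro T
          by_cases h1 : i ∈ T <;> by_cases h2 : j ∈ T <;> simp [hw, h1, h2]
        rw [Finset.sum_congr rfl (fun T _ => this T), ← Finset.sum_filter,
          sum_insert2_bij hij]
        refine Finset.sum_congr rfl (fun S hS => ?_)
        simp only [Finset.mem_filter] at hS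
        rw [Finset.erase_insert (by simp [hij, hS.2.1]),
          show insert i (insert j S) = insert j (insert i S) from Finset.insert_comm _ _ _]
        rw [Finset.erase_insert (by simp [Ne.symm hij, hS.2.2]),
          show insert j (insert i S) = insert i (insert j S) from Finset.insert_comm _ _ _]
      have e2 : (∑ S : Finset (Fin n), v i S * v j S)
          = ∑ S ∈ univ.filter (fun S => i ∉ S ∧ j ∉ S),
              (sgn i S * a i * b (insert i S)) * (sgn j S * a j * b (insert j S)) := by
        have : ∀ S : Finset (Fin n), v i S * v j S
            = if i ∉ S ∧ j ∉ S then
                (sgn i S * a i * b (insert i S)) * (sgn j S * a j * b (insert j S)) else 0 := by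
          intro S
          by_cases h1 : i ∈ S <;> by_cases h2 : j ∈ S <;> simp [hv, h1, h2]
        rw [Finset.sum_congr rfl (fun S _ => this S), ← Finset.sum_filter]
      rw [e1, e2, ← Finset.sum_add_distrib]
      refine Finset.sum_eq_zero (fun S hS => ?_)
      simp only [Finset.mem_filter] at hS
      have h := sgn_pair hij hS.2.1 hS.2.2
      linear_combination (a i * a j * b (insert j S) * b (insert i S)) * h
  calc (∑ T : Finset (Fin n), wedge1 a b T * wedge1 a b T)
      + (∑ S : Finset (Fin n), inter1 a b S * inter1 a b S)
      = ∑ i : Fin n, ∑ j : Fin n,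
          ((∑ T : Finset (Fin n), w i T * w j T) + (∑ S : Finset (Fin n), v i S * v j S)) := by
        have swap3 : ∀ (F : Fin n → Fin n → Finset (Fin n) → ℝ),
            ∑ T : Finset (Fin n), ∑ i : Fin n, ∑ j : Fin n, F i j T
              = ∑ i : Fin n, ∑ j : Fin n, ∑ T : Finset (Fin n), F i j T := by
          intro F
          rw [Finset.sum_comm]
          exact Finset.sum_congr rfl fun i _ => Finset.sum_comm
        simp only [hwedge, hinter, Finset.sum_mul_sum]
        rw [swap3 (fun i j T => w i T * w j T), swap3 (fun i j S => v i S * v j S)]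
        simp only [Finset.sum_add_distrib]
    _ = ∑ i : Fin n, a i * a i * ∑ S : Finset (Fin n), b S * b S := by
        refine Finset.sum_congr rfl (fun i _ => ?_)
        rw [Finset.sum_congr rfl (fun j _ => key i j), Finset.sum_ite_eq]
        simp
    _ = (∑ i : Fin n, a i * a i) * (∑ S : Finset (Fin n), b S * b S) := by
        rw [Finset.sum_mul]

lemma inner_sum {ι : Type*} [Fintype ι] (x y : EuclideanSpace ℝ ι) :
    ⟪x, y⟫_ℝ = ∑ i, x i * y i := by
  simp [PiLp.inner_apply, RCLike.inner_apply, mul_comm]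

lemma isDeg_wedge {k : ℕ} (a : EuclideanSpace ℝ (Fin n))
    (b : EuclideanSpace ℝ (Finset (Fin n))) (hb : IsDeg k b) :
    IsDeg (k + 1) (wedge1 a b) := by
  intro T hT
  rw [wedge1, WithLp.ofLp_toLp]
  apply Finset.sum_eq_zero
  intro i _
  by_cases h : i ∈ T
  · rw [if_pos h, hb _ ?_, mul_zero]
    rw [Finset.card_erase_of_mem h]
    have : 0 < T.card := Finset.card_pos.2 ⟨i, h⟩
    omega
  · rw [if_neg h]

end LHaux

/-- If `A` is Legendre elliptic with constant `γ > 0` on `Λ^{k+1}ℝ^n` and `Ã` is the map on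
`Λ^k ℝ^n ⊗ ℝ^n` defined on elementary tensors by
`⟨Ã(b⊗a); b⊗a⟩ = ⟨A(a∧b); a∧b⟩ + ⟨a⌟b; a⌟b⟩`, then `Ã` satisfies the Legendre–Hadamard
condition `⟨Ã(b⊗a); b⊗a⟩ ≥ min(γ,1)·|a|²|b|²`.  Here `Atil b a` denotes the quadratic form
`⟨Ã(b⊗a); b⊗a⟩` evaluated on the elementary tensor `b ⊗ a`. -/
theorem legendre_hadamard_of_legendre {n k : ℕ} (γ : ℝ) (hγ : 0 < γ)
    (A : EuclideanSpace ℝ (Finset (Fin n)) →ₗ[ℝ] EuclideanSpace ℝ (Finset (Fin n)))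
    (hA : ∀ ξ : EuclideanSpace ℝ (Finset (Fin n)), IsDeg (k + 1) ξ → γ * ‖ξ‖ ^ 2 ≤ ⟪A ξ, ξ⟫_ℝ)
    (Atil : EuclideanSpace ℝ (Finset (Fin n)) → EuclideanSpace ℝ (Fin n) → ℝ)
    (hAtil : ∀ (b : EuclideanSpace ℝ (Finset (Fin n))) (a : EuclideanSpace ℝ (Fin n)),
      Atil b a = ⟪A (wedge1 a b), wedge1 a b⟫_ℝ + ⟪inter1 a b, inter1 a b⟫_ℝ) :
    ∀ (a : EuclideanSpace ℝ (Fin n)) (b : EuclideanSpace ℝ (Finset (Fin n))), IsDeg k b →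
      min γ 1 * (‖a‖ ^ 2 * ‖b‖ ^ 2) ≤ Atil b a := by
  intro a b hb
  rw [hAtil]
  have h1 : γ * ‖wedge1 a b‖ ^ 2 ≤ ⟪A (wedge1 a b), wedge1 a b⟫_ℝ :=
    hA _ (LHaux.isDeg_wedge a b hb)
  have h2 : ⟪inter1 a b, inter1 a b⟫_ℝ = ‖inter1 a b‖ ^ 2 := real_inner_self_eq_norm_sq _
  have hpyth : ‖wedge1 a b‖ ^ 2 + ‖inter1 a b‖ ^ 2 = ‖a‖ ^ 2 * ‖b‖ ^ 2 := by
    rw [← real_inner_self_eq_norm_sq, ← real_inner_self_eq_norm_sq,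
      ← real_inner_self_eq_norm_sq, ← real_inner_self_eq_norm_sq,
      LHaux.inner_sum, LHaux.inner_sum, LHaux.inner_sum, LHaux.inner_sum]
    exact LHaux.pyth a b
  nlinarith [min_le_left γ 1, min_le_right γ 1, sq_nonneg ‖wedge1 a b‖,
    sq_nonneg ‖inter1 a b‖, sq_nonneg ‖a‖, sq_nonneg ‖b‖, mul_nonneg (sq_nonneg ‖a‖) (sq_nonneg ‖b‖)]
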